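/- For the exponential time decay attribution rule (with any half-life parameter), the impression adjacency relation with post-attribution contribution bound enforcement is invalid: the ℓ1-distance between attributed datasets of adjacent datasets (differing by one impression) is not bounded by C₀·r for any absolute constant C₀. -/

import Mathlib

/-! Framework for differentially private ad conversion measurement
(Delaney et al., "Differentially Private Ad Conversion Measurement"). -/

structure Impression where
  time : ℕ
  user : ℕ
  pub : ℕ
  adv : ℕ
  id : ℕ
deriving DecidableEq

structure Conversion where
  time : ℕ
  user : ℕ
  adv : ℕ
  id : ℕ
deriving DecidableEq

structure Dataset where
  imps : List Impression
  convs : List Conversion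

/-- An attribution rule maps a time-ordered list of impressions and a conversion
to a list of credits (one per impression). -/
abbrev AttrRule := List Impression → Conversion → List ℝ

/-- A valid attribution rule outputs one nonnegative weight per impression, summing to 1. -/
def ValidRule (a : AttrRule) : Prop :=
  ∀ is c, is ≠ [] →
    (a is c).length = is.length ∧ (a is c).sum = 1 ∧ ∀ w ∈ a is c, (0 : ℝ) ≤ w

/-- Impressions eligible for attribution of conversion `c`: those occurring earlier
with the same user and advertiser. -/
def eligible (D : Dataset) (c : Conversion) : List Impression :=
  D.imps.filter fun i => decide (i.time < c.time ∧ i.user = c.user ∧ i.adv = c.adv)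

/-- ℓ₁ distance between attributed datasets. -/
noncomputable def l1dist (w w' : (Impression × Conversion) →₀ ℝ) : ℝ :=
  (w - w').sum fun _ v => |v|

/-- Impressions and conversions are listed in time order. -/
def SortedDS (D : Dataset) : Prop :=
  D.imps.Pairwise (fun i j => i.time ≤ j.time) ∧
  D.convs.Pairwise (fun c c' => c.time ≤ c'.time)

/-- Inner loop of post-attribution contribution-bound enforcement: each weighted
(impression, conversion) pair is kept only if the remaining bound of its scope covers
the weight, in which case the weight is deducted. -/
noncomputable def applyPairs {σ : Type} [DecidableEq σ] (s : Impression → σ) (c : Conversion) :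
    List (Impression × ℝ) → (σ → ℝ) × ((Impression × Conversion) →₀ ℝ) →
      (σ → ℝ) × ((Impression × Conversion) →₀ ℝ)
  | [], st => st
  | (i, w) :: rest, st =>
      if w ≤ st.1 (s i) then
        applyPairs s c rest
          (Function.update st.1 (s i) (st.1 (s i) - w), st.2 + Finsupp.single (i, c) w)
      else
        applyPairs s c rest st

/-- Attribution with post-attribution contribution bound enforcement (Algorithm 1),
with contribution bounding scope map `s` and contribution bound `r`. -/
noncomputable def postAttr {σ : Type} [DecidableEq σ] (a : AttrRule) (s : Impression → σ)
    (r : ℝ) (D : Dataset) : (Impression × Conversion) →₀ ℝ :=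
  (D.convs.foldl
    (fun st c => applyPairs s c ((eligible D c).zip (a (eligible D c) c)) st)
    ((fun _ => r : σ → ℝ), (0 : (Impression × Conversion) →₀ ℝ))).2

/-- Attribution with pre-attribution contribution bound enforcement (Algorithm 2):
for each conversion, every scope with an eligible impression pays one unit of its bound
if available, otherwise its impressions are excluded from attribution. -/
noncomputable def preAttr {σ : Type} [DecidableEq σ] (a : AttrRule) (s : Impression → σ)
    (r : ℝ) (D : Dataset) : (Impression × Conversion) →₀ ℝ :=
  (D.convs.foldl
    (fun (st : (σ → ℝ) × ((Impression × Conversion) →₀ ℝ)) c =>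
      let el := eligible D c
      let surv := el.filter fun i => decide ((1 : ℝ) ≤ st.1 (s i))
      let scopes := (el.map s).dedup
      ((fun x => if x ∈ scopes ∧ (1 : ℝ) ≤ st.1 x then st.1 x - 1 else st.1 x : σ → ℝ),
        st.2 + ((surv.zip (a surv c)).map fun p => Finsupp.single (p.1, c) p.2).sum))
    ((fun _ => r : σ → ℝ), (0 : (Impression × Conversion) →₀ ℝ))).2

/-- Attribution without any contribution bound enforcement. -/
noncomputable def attrNoCap (a : AttrRule) (D : Dataset) :
    (Impression × Conversion) →₀ ℝ :=
  (D.convs.map fun c =>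
    (((eligible D c).zip (a (eligible D c) c)).map fun p => Finsupp.single (p.1, c) p.2).sum).sum

/-- Adjacency: `D'` results from `D` by adding a single impression (in time order). -/
def AddOneImpression (D D' : Dataset) : Prop :=
  ∃ (i0 : Impression) (l₁ l₂ : List Impression),
    D.imps = l₁ ++ l₂ ∧ D'.imps = l₁ ++ i0 :: l₂ ∧ D.convs = D'.convs

/-- Adjacency: `D` results from `D'` by removing all impressions whose scope (under `si`)
is `v` and all conversions whose scope (under `sc`) is `v`. -/
def RemovesScope {σ : Type} [DecidableEq σ] (si : Impression → σ)
    (sc : Conversion → Option σ) (v : σ) (D D' : Dataset) : Prop :=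
  D.imps = D'.imps.filter (fun i => decide (si i ≠ v)) ∧
  D.convs = D'.convs.filter (fun c => decide (sc c ≠ some v))

/-- First-touch attribution. -/
noncomputable def FTA : AttrRule := fun is _ =>
  match is with
  | [] => []
  | _ :: t => 1 :: t.map fun _ => 0

/-- Last-touch attribution. -/
noncomputable def LTA : AttrRule := fun is _ =>
  match is with
  | [] => []
  | _ :: _ => List.replicate (is.length - 1) 0 ++ [1]

/-- Uniform multi-touch attribution. -/
noncomputable def UNI : AttrRule := fun is _ => is.map fun _ => ((is.length : ℝ))⁻¹

/-- U-shaped attribution. -/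
noncomputable def USH : AttrRule := fun is _ =>
  match is with
  | [] => []
  | [_] => [1]
  | [_, _] => [0.5, 0.5]
  | _ :: _ :: _ :: _ =>
      (0.4 : ℝ) :: (List.replicate (is.length - 2) ((0.2 : ℝ) / ((is.length : ℝ) - 2)) ++ [0.4])

/-- Exponential time decay attribution with half-life `th`. -/
noncomputable def EXPR (th : ℝ) : AttrRule := fun is c =>
  let wt : Impression → ℝ := fun i => (2 : ℝ) ^ (-(((c.time : ℝ) - (i.time : ℝ)) / th))
  is.map fun i => wt i / (is.map wt).sum

namespace CorA8

open List Finsupp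

/-! ### Generic lemmas about `applyPairs` -/

lemma applyPairs_append {σ : Type} [DecidableEq σ] (s : Impression → σ) (c : Conversion)
    (l₁ l₂ : List (Impression × ℝ)) :
    ∀ st, applyPairs s c (l₁ ++ l₂) st = applyPairs s c l₂ (applyPairs s c l₁ st) := by
  induction l₁ with
  | nil => intro st; rfl
  | cons p rest ih =>
    intro st
    obtain ⟨i, w⟩ := p
    by_cases h : w ≤ st.1 (s i) <;> simp [applyPairs, h, ih]

lemma applyPairs_single_reject {σ : Type} [DecidableEq σ] (s : Impression → σ)
    (c : Conversion) (i : Impression) (w : ℝ) (st) (h : ¬ w ≤ st.1 (s i)) :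
    applyPairs s c [(i, w)] st = st := by
  simp [applyPairs, h]

lemma applyPairs_single_accept {σ : Type} [DecidableEq σ] (s : Impression → σ)
    (c : Conversion) (i : Impression) (w : ℝ) (st) (h : w ≤ st.1 (s i)) :
    applyPairs s c [(i, w)] st =
      (Function.update st.1 (s i) (st.1 (s i) - w), st.2 + Finsupp.single (i, c) w) := by
  simp [applyPairs, h]

/-- If every pair's weight fits in its (distinct) scope's budget, all pairs are accepted. -/
lemma applyPairs_accept_all (c : Conversion) :
    ∀ (l : List (Impression × ℝ)) (st : (Impression → ℝ) × ((Impression × Conversion) →₀ ℝ)),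
      (l.map Prod.fst).Nodup →
      (∀ p ∈ l, p.2 ≤ st.1 p.1) →
      (applyPairs (fun i => i) c l st).2
          = st.2 + (l.map fun p => Finsupp.single (p.1, c) p.2).sum ∧
      ∀ x, (applyPairs (fun i => i) c l st).1 x
          = st.1 x - ((l.filter fun p => decide (p.1 = x)).map Prod.snd).sum := by
  intro l
  induction l with
  | nil => intro st _ _; simp [applyPairs]
  | cons p rest ih =>
    intro st hnd hle
    obtain ⟨i, w⟩ := p
    have hacc : w ≤ st.1 i := hle (i, w) List.mem_cons_self
    have hnotin : i ∉ rest.map Prod.fst := by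
      simpa using (List.nodup_cons.mp hnd).1
    have hndr : (rest.map Prod.fst).Nodup := (List.nodup_cons.mp hnd).2
    set st' : (Impression → ℝ) × ((Impression × Conversion) →₀ ℝ) :=
      (Function.update st.1 i (st.1 i - w), st.2 + Finsupp.single (i, c) w) with hst'
    have hstep : applyPairs (fun i => i) c ((i, w) :: rest) st
        = applyPairs (fun i => i) c rest st' := by
      simp [applyPairs, hacc, hst']
    have hle' : ∀ p ∈ rest, p.2 ≤ st'.1 p.1 := by
      intro q hq
      have hne : q.1 ≠ i := by
        intro h; exact hnotin (h ▸ List.mem_map_of_mem (f := Prod.fst) hq)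
      have : st'.1 q.1 = st.1 q.1 := Function.update_of_ne hne _ _
      rw [this]; exact hle q (List.mem_cons_of_mem _ hq)
    obtain ⟨h2, h1⟩ := ih st' hndr hle'
    constructor
    · rw [hstep, h2]
      simp [hst', add_assoc]
    · intro x
      rw [hstep, h1 x]
      by_cases hx : i = x
      · subst hx
        have hrest : rest.filter (fun p => decide (p.1 = i)) = [] := by
          rw [List.filter_eq_nil_iff]
          intro q hq hmem
          exact hnotin (by
            have : q.1 = i := by simpa using hmem
            exact this ▸ List.mem_map_of_mem (f := Prod.fst) hq)
        simp [hst', hrest, Function.update_self]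
      · have hupd : Function.update st.1 i (st.1 i - w) x = st.1 x :=
          Function.update_of_ne (Ne.symm hx) _ _
        simp [hst', hupd, hx]

/-- Sum of the weights in a nodup-keyed pair list at a present key. -/
lemma filter_key_sum {l : List (Impression × ℝ)} (hnd : (l.map Prod.fst).Nodup)
    {x : Impression} {w : ℝ} (hmem : (x, w) ∈ l) :
    ((l.filter fun p => decide (p.1 = x)).map Prod.snd).sum = w := by
  induction l with
  | nil => cases hmem
  | cons p rest ih =>
    obtain ⟨i, v⟩ := p
    have hnotin : i ∉ rest.map Prod.fst := by simpa using (List.nodup_cons.mp hnd).1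
    have hndr := (List.nodup_cons.mp hnd).2
    rcases List.mem_cons.mp hmem with h | h
    · obtain ⟨h1, h2⟩ := Prod.mk.injEq .. ▸ h
      injection h with h1 h2
      subst h1; subst h2
      have hrest : rest.filter (fun p => decide (p.1 = x)) = [] := by
        rw [List.filter_eq_nil_iff]
        intro q hq hm
        exact hnotin (by
          have : q.1 = x := by simpa using hm
          exact this ▸ List.mem_map_of_mem (f := Prod.fst) hq)
      simp [hrest]
    · have hne : i ≠ x := by
        intro he
        exact hnotin (he ▸ (List.mem_map_of_mem (f := Prod.fst) h : (x, w).1 ∈ _))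
      simp [hne, ih hndr h]

lemma filter_key_nil {l : List (Impression × ℝ)} {x : Impression}
    (hx : x ∉ l.map Prod.fst) :
    (l.filter fun p => decide (p.1 = x)) = [] := by
  rw [List.filter_eq_nil_iff]
  intro q hq hm
  have : q.1 = x := by simpa using hm
  exact hx (this ▸ List.mem_map_of_mem (f := Prod.fst) hq)

/-! ### Mass of a finsupp -/

noncomputable def mass (f : (Impression × Conversion) →₀ ℝ) : ℝ := f.sum fun _ v => v

lemma mass_add (f g : (Impression × Conversion) →₀ ℝ) : mass (f + g) = mass f + mass g :=
  Finsupp.sum_add_index' (fun _ => rfl) (fun _ _ _ => rfl)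

lemma mass_zero : mass 0 = 0 := Finsupp.sum_zero_index

lemma mass_single (k : Impression × Conversion) (v : ℝ) : mass (Finsupp.single k v) = v :=
  Finsupp.sum_single_index rfl

lemma mass_sub (f g : (Impression × Conversion) →₀ ℝ) : mass (f - g) = mass f - mass g :=
  Finsupp.sum_sub_index (fun _ _ _ => rfl)

lemma mass_le_l1dist (f g : (Impression × Conversion) →₀ ℝ) :
    mass f - mass g ≤ l1dist f g := by
  rw [← mass_sub]
  unfold l1dist mass Finsupp.sum
  exact Finset.sum_le_sum fun k _ => le_abs_self _

/-! ### The counterexample datasets -/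

def bimp (k : ℕ) : Impression := ⟨0, 0, 0, 0, k⟩
def aimp (ta n : ℕ) : Impression := ⟨ta, 0, 0, 0, n⟩
def cnv (ta : ℕ) : Conversion := ⟨ta + 1, 0, 0, 0⟩
def bs (n : ℕ) : List Impression := (List.range n).map bimp

lemma bimp_injective : Function.Injective bimp := by
  intro a b h
  simpa [bimp] using congrArg Impression.id h

lemma bs_nodup (n : ℕ) : (bs n).Nodup :=
  (@List.nodup_range n).map bimp_injective

lemma aimp_not_mem_bs (ta n : ℕ) : aimp ta n ∉ bs n := by
  intro h
  obtain ⟨k, hk, he⟩ := List.mem_map.mp h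
  have : k = n := by simpa [bimp, aimp] using congrArg Impression.id he
  have hk' : k < n := List.mem_range.mp hk
  omega

lemma pairwise_of_total {α : Type*} {R : α → α → Prop} (h : ∀ a b, R a b) :
    ∀ l : List α, List.Pairwise R l
  | [] => .nil
  | a :: t => .cons (fun b _ => h a b) (pairwise_of_total h t)

lemma eligible_eq (imps : List Impression) (convs : List Conversion) (ta : ℕ)
    (h : ∀ i ∈ imps, i.time < ta + 1 ∧ i.user = 0 ∧ i.adv = 0) :
    eligible ⟨imps, convs⟩ (cnv ta) = imps := by
  unfold eligible
  rw [List.filter_eq_self]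
  intro i hi
  simpa [cnv] using h i hi

lemma mem_bs_time {n : ℕ} {i : Impression} (h : i ∈ bs n) : i.time = 0 ∧ i.user = 0 ∧ i.adv = 0 := by
  obtain ⟨k, _, rfl⟩ := List.mem_map.mp h
  simp [bimp]

/-! ### zip-with-replicate helpers -/

lemma mem_zip_replicate {α : Type*} {l : List α} {m : ℕ} {v : ℝ} {p : α × ℝ}
    (h : p ∈ l.zip (List.replicate m v)) : p.1 ∈ l ∧ p.2 = v := by
  obtain ⟨i, w⟩ := p
  obtain ⟨h1, h2⟩ := List.of_mem_zip h
  exact ⟨h1, List.eq_of_mem_replicate h2⟩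

lemma zip_replicate_mem {α : Type*} {l : List α} {a : α} (h : a ∈ l) {m : ℕ}
    (hm : l.length ≤ m) (v : ℝ) : (a, v) ∈ l.zip (List.replicate m v) := by
  induction l generalizing m with
  | nil => cases h
  | cons x t ih =>
    obtain ⟨m', rfl⟩ : ∃ m', m = m' + 1 := by
      cases m with
      | zero => simp at hm
      | succ m' => exact ⟨m', rfl⟩
    rcases List.mem_cons.mp h with rfl | h
    · simp [List.replicate_succ]
    · have := ih h (by simpa using Nat.succ_le_succ_iff.mp hm) 
      simpa [List.replicate_succ] using Or.inr this

lemma map_zip_replicate_aux {α β : Type*} (f : α × ℝ → β) (v : ℝ) :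
    ∀ l : List α, (l.zip (List.replicate l.length v)).map f = l.map fun a => f (a, v)
  | [] => rfl
  | a :: t => by simp [List.replicate_succ, map_zip_replicate_aux f v t]

lemma map_zip_replicate {α β : Type*} (f : α × ℝ → β) (v : ℝ) {l : List α} {m : ℕ}
    (hm : l.length = m) : (l.zip (List.replicate m v)).map f = l.map fun a => f (a, v) := by
  subst hm; exact map_zip_replicate_aux f v l

/-! ### Weights of EXP on the constructed lists -/

lemma EXPR_bs (th : ℝ) (hth : 0 < th) (n ta : ℕ) (hn : n ≠ 0) :
    EXPR th (bs n) (cnv ta) = List.replicate n ((n : ℝ)⁻¹) := by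
  have hb : ∀ i ∈ bs n, ((2 : ℝ) ^ (-((((cnv ta).time : ℝ) - (i.time : ℝ)) / th)))
      = (2 : ℝ) ^ (-(((ta : ℝ) + 1) / th)) := by
    intro i hi
    have := (mem_bs_time hi).1
    simp [cnv, this]
  unfold EXPR
  have hsum : ((bs n).map fun i =>
      (2 : ℝ) ^ (-((((cnv ta).time : ℝ) - (i.time : ℝ)) / th))).sum
      = (n : ℝ) * (2 : ℝ) ^ (-(((ta : ℝ) + 1) / th)) := by
    rw [List.map_congr_left hb]
    have : (bs n).length = n := by simp [bs]
    rw [List.map_const', this, List.sum_replicate, nsmul_eq_mul]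
  have hpos : (0:ℝ) < (2 : ℝ) ^ (-(((ta : ℝ) + 1) / th)) := Real.rpow_pos_of_pos two_pos _
  show ((bs n).map fun i =>
      (2 : ℝ) ^ (-((((cnv ta).time : ℝ) - (i.time : ℝ)) / th)) /
        (((bs n).map fun i =>
          (2 : ℝ) ^ (-((((cnv ta).time : ℝ) - (i.time : ℝ)) / th))).sum))
    = List.replicate n ((n : ℝ)⁻¹)
  simp only [hsum]
  rw [List.map_congr_left (g := fun _ => (n:ℝ)⁻¹) (fun i hi => by
    rw [hb i hi]
    rw [eq_comm, inv_eq_iff_eq_inv, eq_comm, inv_div]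
    field_simp)]
  rw [List.map_const']
  simp [bs]

lemma EXPR_bs_a (th : ℝ) (n ta : ℕ) :
    EXPR th (bs n ++ [aimp ta n]) (cnv ta) =
      List.replicate n ((2 : ℝ) ^ (-(((ta : ℝ) + 1) / th)) /
          ((n : ℝ) * (2 : ℝ) ^ (-(((ta : ℝ) + 1) / th)) + (2 : ℝ) ^ (-(1 / th)))) ++
        [(2 : ℝ) ^ (-(1 / th)) /
          ((n : ℝ) * (2 : ℝ) ^ (-(((ta : ℝ) + 1) / th)) + (2 : ℝ) ^ (-(1 / th)))] := by
  set wb : ℝ := (2 : ℝ) ^ (-(((ta : ℝ) + 1) / th)) with hwb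
  set wa : ℝ := (2 : ℝ) ^ (-(1 / th)) with hwa
  have hb : ∀ i ∈ bs n, ((2 : ℝ) ^ (-((((cnv ta).time : ℝ) - (i.time : ℝ)) / th))) = wb := by
    intro i hi
    have := (mem_bs_time hi).1
    simp [cnv, this, hwb]
  have ha : ((2 : ℝ) ^ (-((((cnv ta).time : ℝ) - ((aimp ta n).time : ℝ)) / th))) = wa := by
    have h1 : (((cnv ta).time : ℝ) - ((aimp ta n).time : ℝ)) = 1 := by
      simp [cnv, aimp]
    rw [h1, hwa]
  have hlen : (bs n).length = n := by simp [bs]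
  have hsum : (((bs n ++ [aimp ta n]).map fun i =>
      (2 : ℝ) ^ (-((((cnv ta).time : ℝ) - (i.time : ℝ)) / th))).sum
      = (n : ℝ) * wb + wa) := by
    rw [List.map_append, List.sum_append, List.map_congr_left hb, List.map_const', hlen,
      List.sum_replicate, nsmul_eq_mul]
    simp [ha]
  show ((bs n ++ [aimp ta n]).map fun i =>
      (2 : ℝ) ^ (-((((cnv ta).time : ℝ) - (i.time : ℝ)) / th)) /
        (((bs n ++ [aimp ta n]).map fun i =>
          (2 : ℝ) ^ (-((((cnv ta).time : ℝ) - (i.time : ℝ)) / th))).sum)) = _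
  simp only [hsum]
  rw [List.map_append, List.map_congr_left (g := fun _ => wb / ((n : ℝ) * wb + wa))
    (fun i hi => by rw [hb i hi]), List.map_const', hlen]
  simp [ha]

/-! ### The fold over the conversions, dataset `D` (uniform weights, all accepted) -/

lemma loopD (th : ℝ) (n ta : ℕ) {u : ℝ} (hu : 0 ≤ u) (hul : (n : ℝ) * u ≤ 1)
    (hw : EXPR th (bs n) (cnv ta) = List.replicate n u) (convs : List Conversion)
    (j : ℕ) (hj : j ≤ n) :
    List.foldl (fun st c => applyPairs (fun i => i) c
        ((eligible ⟨bs n, convs⟩ c).zip (EXPR th (eligible ⟨bs n, convs⟩ c) c)) st)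
      ((fun _ => (1 : ℝ)), 0) (List.replicate j (cnv ta))
    = ((fun x => if x ∈ bs n then 1 - (j : ℝ) * u else 1),
        j • ((bs n).map fun b => Finsupp.single (b, cnv ta) u).sum) := by
  have hel : eligible ⟨bs n, convs⟩ (cnv ta) = bs n := by
    apply eligible_eq
    intro i hi
    obtain ⟨h1, h2, h3⟩ := mem_bs_time hi
    omega
  have hlen : (bs n).length = n := by simp [bs]
  have hkeys : ((bs n).zip (List.replicate n u)).map Prod.fst = bs n := by
    apply List.map_fst_zip
    simp [hlen]
  induction j with
  | zero =>
    refine Prod.ext ?_ ?_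
    · funext x; simp
    · simp
  | succ j ih =>
    have hj' : j ≤ n := Nat.le_of_succ_le hj
    rw [List.replicate_succ', List.foldl_append, ih hj']
    simp only [List.foldl_cons, List.foldl_nil]
    rw [hel, hw]
    have hle : ∀ p ∈ (bs n).zip (List.replicate n u), p.2 ≤
        (fun x => if x ∈ bs n then 1 - (j : ℝ) * u else (1 : ℝ)) p.1 := by
      intro p hp
      obtain ⟨hp1, hp2⟩ := mem_zip_replicate hp
      simp only [hp1, if_pos, hp2]
      have hcast : ((j : ℝ) + 1) ≤ (n : ℝ) := by exact_mod_cast hj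
      nlinarith
    have hknd : (((bs n).zip (List.replicate n u)).map Prod.fst).Nodup := by
      rw [hkeys]; exact bs_nodup n
    obtain ⟨h2, h1⟩ := applyPairs_accept_all (cnv ta) ((bs n).zip (List.replicate n u))
      ((fun x => if x ∈ bs n then 1 - (j : ℝ) * u else 1),
        j • ((bs n).map fun b => Finsupp.single (b, cnv ta) u).sum)
      hknd hle
    refine Prod.ext ?_ ?_
    · funext x
      rw [h1 x]
      by_cases hx : x ∈ bs n
      · have hmem : (x, u) ∈ (bs n).zip (List.replicate n u) :=
          zip_replicate_mem hx (le_of_eq hlen) u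
        rw [filter_key_sum hknd hmem]
        simp only [hx, if_pos]
        push_cast; ring
      · rw [filter_key_nil (by rw [hkeys]; exact hx)]
        simp [hx]
    · rw [h2]
      rw [map_zip_replicate _ _ hlen]
      exact (succ_nsmul _ _).symm

/-! ### The fold over the conversions, dataset `D'` -/

lemma loopD' (th : ℝ) (n ta : ℕ) {β α : ℝ} (hβ : 0 ≤ β) (hβl : (n : ℝ) * β ≤ 1)
    (hα1 : α ≤ 1) (hαr : 1 - α < α)
    (hw : EXPR th (bs n ++ [aimp ta n]) (cnv ta) = List.replicate n β ++ [α])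
    (convs : List Conversion) (j : ℕ) (hj : j ≤ n) :
    List.foldl (fun st c => applyPairs (fun i => i) c
        ((eligible ⟨bs n ++ [aimp ta n], convs⟩ c).zip
          (EXPR th (eligible ⟨bs n ++ [aimp ta n], convs⟩ c) c)) st)
      ((fun _ => (1 : ℝ)), 0) (List.replicate j (cnv ta))
    = ((fun x => if x ∈ bs n then 1 - (j : ℝ) * β
          else if x = aimp ta n then (if j = 0 then 1 else 1 - α) else 1),
        (if j = 0 then 0 else Finsupp.single (aimp ta n, cnv ta) α) +
          j • ((bs n).map fun b => Finsupp.single (b, cnv ta) β).sum) := by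
  have hel : eligible ⟨bs n ++ [aimp ta n], convs⟩ (cnv ta) = bs n ++ [aimp ta n] := by
    apply eligible_eq
    intro i hi
    rcases List.mem_append.mp hi with hi | hi
    · obtain ⟨h1, h2, h3⟩ := mem_bs_time hi
      omega
    · have : i = aimp ta n := by simpa using hi
      subst this
      simp [aimp]
  have hlen : (bs n).length = n := by simp [bs]
  have hkeys : ((bs n).zip (List.replicate n β)).map Prod.fst = bs n := by
    apply List.map_fst_zip
    simp [hlen]
  have hknd : (((bs n).zip (List.replicate n β)).map Prod.fst).Nodup := by
    rw [hkeys]; exact bs_nodup n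
  have hanb := aimp_not_mem_bs ta n
  induction j with
  | zero =>
    refine Prod.ext ?_ ?_
    · funext x; simp
    · simp
  | succ j ih =>
    have hj' : j ≤ n := Nat.le_of_succ_le hj
    rw [List.replicate_succ', List.foldl_append, ih hj']
    simp only [List.foldl_cons, List.foldl_nil]
    rw [hel, hw]
    rw [List.zip_append (by simp [hlen])]
    rw [applyPairs_append]
    set st : (Impression → ℝ) × ((Impression × Conversion) →₀ ℝ) :=
      ((fun x => if x ∈ bs n then 1 - (j : ℝ) * β
          else if x = aimp ta n then (if j = 0 then 1 else 1 - α) else 1),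
        (if j = 0 then 0 else Finsupp.single (aimp ta n, cnv ta) α) +
          j • ((bs n).map fun b => Finsupp.single (b, cnv ta) β).sum) with hst
    have hle : ∀ p ∈ (bs n).zip (List.replicate n β), p.2 ≤ st.1 p.1 := by
      intro p hp
      obtain ⟨hp1, hp2⟩ := mem_zip_replicate hp
      simp only [hst, hp1, if_pos, hp2]
      have hcast : ((j : ℝ) + 1) ≤ (n : ℝ) := by exact_mod_cast hj
      nlinarith
    obtain ⟨h2, h1⟩ := applyPairs_accept_all (cnv ta) ((bs n).zip (List.replicate n β))
      st hknd hle
    set st1 := applyPairs (fun i => i) (cnv ta) ((bs n).zip (List.replicate n β)) st with hst1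
    rw [show [aimp ta n].zip [α] = [(aimp ta n, α)] from rfl]
    have hst1a : st1.1 (aimp ta n) = (if j = 0 then 1 else 1 - α) := by
      rw [h1, filter_key_nil (by rw [hkeys]; exact hanb)]
      simp [hst, hanb]
    have hst1b : ∀ x ∈ bs n, st1.1 x = 1 - ((j : ℝ) + 1) * β := by
      intro x hx
      rw [h1, filter_key_sum hknd (zip_replicate_mem hx (le_of_eq hlen) β)]
      simp only [hst, hx, if_pos]
      ring
    have hst1o : ∀ x, x ∉ bs n → x ≠ aimp ta n → st1.1 x = 1 := by
      intro x hx hxa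
      rw [h1, filter_key_nil (by rw [hkeys]; exact hx)]
      simp [hst, hx, hxa]
    by_cases hj0 : j = 0
    · subst hj0
      have hacc : α ≤ st1.1 ((fun i => i) (aimp ta n)) := by
        simpa [hst1a] using hα1
      rw [applyPairs_single_accept _ _ _ _ _ hacc]
      refine Prod.ext ?_ ?_
      · funext x
        by_cases hxa : x = aimp ta n
        · subst hxa
          simp [Function.update_self, hst1a, hanb]
        · have hupd : (Function.update st1.1 (aimp ta n) (st1.1 (aimp ta n) - α)) x
              = st1.1 x := Function.update_of_ne hxa _ _
          by_cases hx : x ∈ bs n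
          · simp [hupd, hst1b x hx, hx]
          · simp [hupd, hst1o x hx hxa, hx, hxa]
      · show st1.2 + _ = _
        rw [h2, map_zip_replicate _ _ hlen]
        simp only [hst]
        simp only [Nat.cast_zero, zero_mul, if_pos, zero_nsmul, zero_add, Nat.cast_one]
        rw [if_neg (by omega : ¬ (0 + 1 = 0))]
        rw [one_nsmul]
        exact add_comm _ _
    · have hrej : ¬ α ≤ st1.1 ((fun i => i) (aimp ta n)) := by
        simp only [hst1a, if_neg hj0]
        intro h
        linarith
      rw [applyPairs_single_reject _ _ _ _ _ hrej]
      refine Prod.ext ?_ ?_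
      · funext x
        by_cases hx : x ∈ bs n
        · simp only [hst1b x hx, hx, if_pos]
          push_cast; ring
        · by_cases hxa : x = aimp ta n
          · subst hxa
            simp [hst1a, hj0, hanb]
          · simp [hst1o x hx hxa, hx, hxa]
      · show st1.2 = _
        rw [h2, map_zip_replicate _ _ hlen]
        simp only [hst]
        rw [if_neg hj0, if_neg (by omega : ¬ (j + 1 = 0))]
        rw [add_assoc, succ_nsmul]

lemma mass_map_single (l : List Impression) (c : Conversion) (v : ℝ) :
    mass ((l.map fun b => Finsupp.single (b, c) v).sum) = l.length * v := by
  induction l with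
  | nil => simp [mass_zero]
  | cons x t ih =>
    rw [List.map_cons, List.sum_cons, mass_add, mass_single, ih, List.length_cons]
    push_cast; ring

lemma mass_nsmul (j : ℕ) (f : (Impression × Conversion) →₀ ℝ) :
    mass (j • f) = (j : ℝ) * mass f := by
  induction j with
  | zero => simp [mass_zero]
  | succ j ih =>
    rw [succ_nsmul, mass_add, ih]
    push_cast; ring

end CorA8

open CorA8

/-- Corollary A.8: for exponential time decay attribution (any half-life `th > 0`), the
impression adjacency relation with post-attribution enforcement is invalid: with bound
`r = 1`, the ℓ₁-distance between attributed datasets of adjacent datasets is not bounded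
by any absolute constant `C₀` (hence not by `C₀ · r`). -/
theorem post_attr_impression_exp_invalid (th : ℝ) (hth : 0 < th) :
    ∀ C₀ : ℝ, 0 < C₀ → ∃ D D' : Dataset, AddOneImpression D D' ∧ SortedDS D' ∧
      C₀ < l1dist (postAttr (EXPR th) (fun i => i) 1 D)
        (postAttr (EXPR th) (fun i => i) 1 D') := by
  intro C₀ hC₀
  obtain ⟨n, hn⟩ := exists_nat_gt (C₀ + 2)
  have hn1 : 1 ≤ n := by
    by_contra h
    push_neg at h
    have : n = 0 := by omega
    rw [this] at hn
    norm_num at hn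
    linarith
  have hnR : (1:ℝ) ≤ (n:ℝ) := by exact_mod_cast hn1
  have hnne : (n:ℝ) ≠ 0 := by linarith
  obtain ⟨ta, hta⟩ := exists_nat_ge (th * Real.logb 2 (2 * (n:ℝ)^2 + 1))
  set wb : ℝ := (2 : ℝ) ^ (-(((ta : ℝ) + 1) / th)) with hwb
  set wa : ℝ := (2 : ℝ) ^ (-(1 / th)) with hwa
  have hwb0 : 0 < wb := Real.rpow_pos_of_pos two_pos _
  have hwa0 : 0 < wa := Real.rpow_pos_of_pos two_pos _
  -- the key weight-ratio bound
  have hratio : 2 * (n:ℝ)^2 + 1 ≤ wa / wb := by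
    have hdiv : wa / wb = (2:ℝ) ^ ((ta:ℝ) / th) := by
      rw [hwa, hwb, ← Real.rpow_sub two_pos]
      congr 1
      field_simp
      ring
    have hexp : Real.logb 2 (2 * (n:ℝ)^2 + 1) ≤ (ta:ℝ) / th := by
      rw [le_div_iff₀ hth]
      calc Real.logb 2 (2 * (n:ℝ)^2 + 1) * th = th * Real.logb 2 (2 * (n:ℝ)^2 + 1) := by ring
        _ ≤ ta := hta
    have hpos : (0:ℝ) < 2 * (n:ℝ)^2 + 1 := by positivity
    calc (2 * (n:ℝ)^2 + 1) = (2:ℝ) ^ Real.logb 2 (2 * (n:ℝ)^2 + 1) :=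
          (Real.rpow_logb two_pos (by norm_num) hpos).symm
      _ ≤ (2:ℝ) ^ ((ta:ℝ) / th) := by
          rw [Real.rpow_le_rpow_left_iff one_lt_two]
          exact hexp
      _ = wa / wb := hdiv.symm
  have hWa : 2 * (n:ℝ)^2 * wb < wa := by
    have h1 : (2 * (n:ℝ)^2 + 1) * wb ≤ wa := by
      rw [← le_div_iff₀ hwb0]
      exact hratio
    nlinarith [hwb0]
  set S : ℝ := (n:ℝ) * wb + wa with hS
  have hS0 : 0 < S := by positivity
  have hnwb : (n:ℝ) * wb < wa := by nlinarith [hwb0]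
  have hβ0 : (0:ℝ) ≤ wb / S := by positivity
  have hβl : (n:ℝ) * (wb / S) ≤ 1 := by
    rw [mul_div_assoc', div_le_one hS0]
    linarith
  have hα1 : wa / S ≤ 1 := by
    rw [div_le_one hS0]
    nlinarith [hwb0]
  have hαr : 1 - wa / S < wa / S := by
    have h2 : (1:ℝ)/2 < wa / S := by
      rw [lt_div_iff₀ hS0]
      linarith
    linarith
  have hD : postAttr (EXPR th) (fun i => i) 1 ⟨bs n, List.replicate n (cnv ta)⟩
      = n • ((bs n).map fun b => Finsupp.single (b, cnv ta) ((n:ℝ)⁻¹)).sum :=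
    congrArg Prod.snd (loopD th n ta (by positivity)
      (by rw [mul_inv_cancel₀ hnne]) (EXPR_bs th hth n ta (by omega))
      (List.replicate n (cnv ta)) n le_rfl)
  have hD' : postAttr (EXPR th) (fun i => i) 1 ⟨bs n ++ [aimp ta n], List.replicate n (cnv ta)⟩
      = (if n = 0 then 0 else Finsupp.single (aimp ta n, cnv ta) (wa / S)) +
          n • ((bs n).map fun b => Finsupp.single (b, cnv ta) (wb / S)).sum :=
    congrArg Prod.snd (loopD' th n ta hβ0 hβl hα1 hαr (EXPR_bs_a th n ta)
      (List.replicate n (cnv ta)) n le_rfl)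
  have hblen : ((bs n).length : ℝ) = (n : ℝ) := by simp [bs]
  have hmassD : mass (postAttr (EXPR th) (fun i => i) 1 ⟨bs n, List.replicate n (cnv ta)⟩)
      = (n : ℝ) := by
    rw [hD, mass_nsmul, mass_map_single, hblen, mul_inv_cancel₀ hnne, mul_one]
  have hmassD' : mass (postAttr (EXPR th) (fun i => i) 1
        ⟨bs n ++ [aimp ta n], List.replicate n (cnv ta)⟩)
      = wa / S + (n : ℝ) * ((n : ℝ) * (wb / S)) := by
    rw [hD', if_neg (by omega : ¬ n = 0), mass_add, mass_single, mass_nsmul,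
      mass_map_single, hblen]
  have hβub : (n:ℝ) * ((n:ℝ) * (wb / S)) < 1/2 := by
    have h1 : (n:ℝ) * ((n:ℝ) * (wb / S)) = (n:ℝ)^2 * wb / S := by ring
    rw [h1, div_lt_iff₀ hS0]
    nlinarith [hwb0, hwa0]
  refine ⟨⟨bs n, List.replicate n (cnv ta)⟩,
    ⟨bs n ++ [aimp ta n], List.replicate n (cnv ta)⟩, ?_, ?_, ?_⟩
  · exact ⟨aimp ta n, bs n, [], by simp, by simp, rfl⟩
  · constructor
    · show (bs n ++ [aimp ta n]).Pairwise _
      rw [List.pairwise_append]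
      refine ⟨?_, ?_, ?_⟩
      · exact List.pairwise_map.mpr (pairwise_of_total (by simp [bimp]) _)
      · simp
      · intro x hx y hy
        have hxt := (mem_bs_time hx).1
        have hyt : y = aimp ta n := by simpa using hy
        rw [hxt, hyt]
        simp [aimp]
    · exact List.pairwise_replicate.mpr (Or.inr le_rfl)
  · calc C₀ < mass (postAttr (EXPR th) (fun i => i) 1 ⟨bs n, List.replicate n (cnv ta)⟩)
          - mass (postAttr (EXPR th) (fun i => i) 1
              ⟨bs n ++ [aimp ta n], List.replicate n (cnv ta)⟩) := by
          rw [hmassD, hmassD']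
          linarith
      _ ≤ _ := mass_le_l1dist _ _
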